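/- Let β ≥ 1 be an integer, let k ≥ 0 be an integer, and define f : ℝ∖{0} → ℝ by f(a) = Q̃_{β,k}(a) / a^{2β}. Then for every real a ≠ 0, 2 f'(a) + (2β/a) f(a) = −(2k Q̃_{β,k}(a) + Q̃_{β,k+1}(a)) / a^{2β+1}. -/

import Mathlib

open Finset

/-- The signed polynomial
`Q̃_{β,k}(x) = Σ_{l=0}^{β-k-1} (−1)^{l+k} (β+l+k−1)!/((β−l−k−1)! l!) 2^{−l} x^{β−l−k}`
(the empty sum when `k ≥ β`), as a function on `ℝ`. -/
noncomputable def Qtilde (β k : ℕ) (x : ℝ) : ℝ :=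
  ∑ l ∈ Finset.range (β - k),
    (-1 : ℝ) ^ (l + k) * (Nat.factorial (β + l + k - 1) : ℝ) /
      (Nat.factorial (β - l - k - 1) * Nat.factorial l) * (1 / 2) ^ l * x ^ (β - l - k)

lemma Qtilde_key (β k : ℕ) (hβ : 1 ≤ β) (a : ℝ) :
    2 * a * (∑ l ∈ Finset.range (β - k),
      (-1 : ℝ) ^ (l + k) * (Nat.factorial (β + l + k - 1) : ℝ) /
        (Nat.factorial (β - l - k - 1) * Nat.factorial l) * (1 / 2) ^ l *
        (((β - l - k : ℕ) : ℝ) * a ^ (β - l - k - 1))) =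
    (2 * (β : ℝ) - 2 * (k : ℝ)) * Qtilde β k a - Qtilde β (k + 1) a := by
  unfold Qtilde
  by_cases h : β ≤ k
  · have h1 : β - k = 0 := by omega
    have h2 : β - (k + 1) = 0 := by omega
    simp [h1, h2]
  · push_neg at h
    obtain ⟨m, hm⟩ : ∃ m, β - k = m + 1 := ⟨β - k - 1, by omega⟩
    have hm1 : β - (k + 1) = m := by omega
    rw [hm, hm1, Finset.mul_sum]
    have step1 : ∀ l ∈ Finset.range (m + 1),
        2 * a * ((-1 : ℝ) ^ (l + k) * (Nat.factorial (β + l + k - 1) : ℝ) /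
          (Nat.factorial (β - l - k - 1) * Nat.factorial l) * (1 / 2) ^ l *
          (((β - l - k : ℕ) : ℝ) * a ^ (β - l - k - 1))) =
        (2 * (β : ℝ) - 2 * (k : ℝ)) *
          ((-1 : ℝ) ^ (l + k) * (Nat.factorial (β + l + k - 1) : ℝ) /
          (Nat.factorial (β - l - k - 1) * Nat.factorial l) * (1 / 2) ^ l *
          a ^ (β - l - k)) +
        (-2 * (l : ℝ)) *
          ((-1 : ℝ) ^ (l + k) * (Nat.factorial (β + l + k - 1) : ℝ) /
          (Nat.factorial (β - l - k - 1) * Nat.factorial l) * (1 / 2) ^ l *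
          a ^ (β - l - k)) := by
      intro l hl
      simp only [Finset.mem_range] at hl
      have hle : l + k ≤ β := by omega
      have hc : ((β - l - k : ℕ) : ℝ) = (β : ℝ) - l - k := by
        have h' : (β - l - k) + (l + k) = β := by omega
        have := congrArg (Nat.cast : ℕ → ℝ) h'
        push_cast at this
        linarith
      have he : a ^ (β - l - k) = a ^ (β - l - k - 1) * a := by
        rw [← pow_succ]; congr 1; omega
      rw [hc, he]
      ring
    rw [Finset.sum_congr rfl step1, Finset.sum_add_distrib, ← Finset.mul_sum]
    have step2 : ∑ l ∈ Finset.range (m + 1),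
        (-2 * (l : ℝ)) *
          ((-1 : ℝ) ^ (l + k) * (Nat.factorial (β + l + k - 1) : ℝ) /
          (Nat.factorial (β - l - k - 1) * Nat.factorial l) * (1 / 2) ^ l *
          a ^ (β - l - k)) =
        - ∑ i ∈ Finset.range m,
          (-1 : ℝ) ^ (i + (k + 1)) * (Nat.factorial (β + i + (k + 1) - 1) : ℝ) /
          (Nat.factorial (β - i - (k + 1) - 1) * Nat.factorial i) * (1 / 2) ^ i *
          a ^ (β - i - (k + 1)) := by
      rw [Finset.sum_range_succ']
      simp only [Nat.cast_zero, mul_zero, zero_mul, add_zero, neg_mul]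
      rw [← Finset.sum_neg_distrib]
      apply Finset.sum_congr rfl
      intro i hi
      simp only [Finset.mem_range] at hi
      have e1 : β + (i + 1) + k - 1 = β + i + (k + 1) - 1 := by omega
      have e2 : β - (i + 1) - k - 1 = β - i - (k + 1) - 1 := by omega
      have e3 : β - (i + 1) - k = β - i - (k + 1) := by omega
      have e4 : (i + 1) + k = i + (k + 1) := by omega
      rw [e1, e2, e3, e4, Nat.factorial_succ]
      have hfi : (Nat.factorial i : ℝ) ≠ 0 := Nat.cast_ne_zero.mpr (Nat.factorial_ne_zero i)
      have hfg : (Nat.factorial (β - i - (k + 1) - 1) : ℝ) ≠ 0 :=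
        Nat.cast_ne_zero.mpr (Nat.factorial_ne_zero _)
      have hip : ((i : ℝ) + 1) ≠ 0 := by positivity
      push_cast
      field_simp
      ring
    rw [step2]
    ring

/-- for integers `β ≥ 1`, `k ≥ 0` and `f(a) = Q̃_{β,k}(a)/a^{2β}`, for
every real `a ≠ 0` one has
`2 f'(a) + (2β/a) f(a) = −(2k Q̃_{β,k}(a) + Q̃_{β,k+1}(a))/a^{2β+1}`. -/
theorem statement9 (β k : ℕ) (hβ : 1 ≤ β) (a : ℝ) (ha : a ≠ 0) :
    2 * deriv (fun t : ℝ => Qtilde β k t / t ^ (2 * β)) a +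
        (2 * (β : ℝ) / a) * (Qtilde β k a / a ^ (2 * β)) =
      -(2 * (k : ℝ) * Qtilde β k a + Qtilde β (k + 1) a) / a ^ (2 * β + 1) := by
  set D : ℝ := ∑ l ∈ Finset.range (β - k),
      (-1 : ℝ) ^ (l + k) * (Nat.factorial (β + l + k - 1) : ℝ) /
        (Nat.factorial (β - l - k - 1) * Nat.factorial l) * (1 / 2) ^ l *
        (((β - l - k : ℕ) : ℝ) * a ^ (β - l - k - 1)) with hD
  have hQ : HasDerivAt (fun t : ℝ => Qtilde β k t) D a := by
    rw [hD]
    unfold Qtilde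
    apply HasDerivAt.fun_sum
    intro l _
    exact (hasDerivAt_pow (β - l - k) a).const_mul _
  have hd : HasDerivAt (fun t : ℝ => Qtilde β k t / t ^ (2 * β))
      ((D * a ^ (2 * β) - Qtilde β k a * (((2 * β : ℕ) : ℝ) * a ^ (2 * β - 1))) /
        (a ^ (2 * β)) ^ 2) a := by
    simpa using hQ.fun_div (hasDerivAt_pow (2 * β) a) (pow_ne_zero _ ha)
  rw [hd.deriv]
  have key := Qtilde_key β k hβ a
  rw [← hD] at key
  have h1 : a ^ (2 * β) = a ^ (2 * β - 1) * a := by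
    rw [← pow_succ]
    congr 1
    omega
  have h2 : a ^ (2 * β + 1) = a ^ (2 * β - 1) * a * a := by
    rw [← pow_succ, ← pow_succ]
    congr 1
    omega
  have hx : a ^ (2 * β - 1) ≠ 0 := pow_ne_zero _ ha
  rw [h1, h2]
  push_cast
  set x : ℝ := a ^ (2 * β - 1) with hxdef
  field_simp
  linear_combination key
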